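/- If in addition ‖f_j‖ ≤ L for all j = 1,...,M, then the Hessian of log J satisfies ∇² log J(ψ) ⪯ A_2 I_n for all ψ ∈ R^n, where A_2 = (1−ν)/ω² + ((1−ν)/ω²)² L². -/

import Mathlib

set_option maxHeartbeats 1000000

open Real Finset

theorem logJ_smooth (n M : ℕ) (Y : EuclideanSpace ℝ (Fin n))
    (f : Fin M → EuclideanSpace ℝ (Fin n)) (pi : Fin M → ℝ) (L : ℝ)
    (hL : ∀ j, ‖f j‖ ≤ L)
    (hpi : ∀ j, 0 < pi j) (hpi1 : ∑ j, pi j = 1)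
    (ν ω : ℝ) (hν : ν ∈ Set.Ioo (0:ℝ) 1) (hω : 0 < ω)
    (J : EuclideanSpace ℝ (Fin n) → ℝ)
    (hJ : ∀ ψ, J ψ = ∑ j, pi j *
      Real.exp (-‖f j - Y‖^2 / (2*ω^2) + (1-ν) * ‖ψ - f j‖^2 / (2*ω^2))) :
    ∀ ψ v, iteratedFDeriv ℝ 2 (fun ψ => Real.log (J ψ)) ψ ![v, v]
      ≤ ((1-ν)/ω^2 + ((1-ν)/ω^2)^2 * L^2) * ‖v‖^2 := by
  intro ψ v
  have hM : 0 < M := Nat.pos_of_ne_zero (by rintro rfl; simp at hpi1)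
  have hL0 : 0 ≤ L := le_trans (norm_nonneg _) (hL ⟨0, hM⟩)
  have hω2 : (0:ℝ) < ω ^ 2 := by positivity
  set a : ℝ := (1 - ν) / ω ^ 2 with ha_def
  have ha : 0 < a := div_pos (by linarith [hν.2]) hω2
  set c : Fin M → ℝ := fun j => pi j * Real.exp (-‖f j - Y‖ ^ 2 / (2 * ω ^ 2)) with hc_def
  have hc : ∀ j, 0 < c j := fun j => mul_pos (hpi j) (Real.exp_pos _)
  have hJ' : ∀ x, J x = ∑ j, c j * Real.exp (a / 2 * ‖x - f j‖ ^ 2) := by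
    intro x
    rw [hJ x]
    refine Finset.sum_congr rfl fun j _ => ?_
    rw [Real.exp_add, hc_def, ha_def]
    have h2 : (1 - ν) * ‖x - f j‖ ^ 2 / (2 * ω ^ 2) = (1 - ν) / ω ^ 2 / 2 * ‖x - f j‖ ^ 2 := by
      rw [div_div, div_mul_eq_mul_div, mul_comm (ω^2) 2]
    rw [h2]; ring
  -- J is smooth and positive, hence g = log ∘ J is smooth
  set g : EuclideanSpace ℝ (Fin n) → ℝ := fun x => Real.log (J x) with hg_def
  have hJfun : J = fun x => ∑ j, c j * Real.exp (a / 2 * ‖x - f j‖ ^ 2) := funext hJ'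
  have hJc : ContDiff ℝ ⊤ J := by
    rw [hJfun]
    refine ContDiff.sum fun j _ => ContDiff.mul contDiff_const ?_
    refine (ContDiff.mul contDiff_const ?_).exp
    exact ContDiff.norm_sq (𝕜 := ℝ) ((contDiff_id (𝕜 := ℝ)).sub contDiff_const)
  have hJpos : ∀ x, 0 < J x := by
    intro x
    rw [hJ' x]
    exact Finset.sum_pos (fun j _ => mul_pos (hc j) (Real.exp_pos _))
      (Finset.univ_nonempty_iff.mpr ⟨⟨0, hM⟩⟩)
  have hg : ContDiff ℝ ⊤ g := hJc.log fun x => (hJpos x).ne'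
  have hgd : Differentiable ℝ g := hg.differentiable (by simp)
  set G := fderiv ℝ g with hG_def
  have hGc : ContDiff ℝ ⊤ G := hg.fderiv_right le_top
  have hGd : Differentiable ℝ G := hGc.differentiable (by simp)
  -- 1-d data along the line t ↦ ψ + t • v
  set w : Fin M → EuclideanSpace ℝ (Fin n) := fun j => ψ - f j with hw_def
  set α : Fin M → ℝ := fun j => a / 2 * ‖w j‖ ^ 2 with hα_def
  set β : Fin M → ℝ := fun j => a * inner ℝ (w j) v with hβ_def
  set γ : ℝ := a / 2 * ‖v‖ ^ 2 with hγ_def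
  set q : Fin M → ℝ → ℝ := fun j t => α j + β j * t + γ * t ^ 2 with hq_def
  have key : ∀ (t : ℝ) (j : Fin M), a / 2 * ‖(ψ + t • v) - f j‖ ^ 2 = q j t := by
    intro t j
    have h1 : (ψ + t • v) - f j = w j + t • v := by rw [hw_def]; exact add_sub_right_comm _ _ _
    rw [h1, norm_add_sq_real, real_inner_smul_right, norm_smul, mul_pow, hq_def, hα_def,
      hβ_def, hγ_def]
    simp only [Real.norm_eq_abs, sq_abs]
    ring
  set S : ℝ → ℝ := fun t => ∑ j, c j * Real.exp (q j t) with hS_def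
  have hSJ : ∀ t, J (ψ + t • v) = S t := by
    intro t
    rw [hJ', hS_def]
    exact Finset.sum_congr rfl fun j _ => by rw [key t j]
  have hSpos : ∀ t, 0 < S t :=
    fun t => Finset.sum_pos (fun j _ => mul_pos (hc j) (Real.exp_pos _))
      (Finset.univ_nonempty_iff.mpr ⟨⟨0, hM⟩⟩)
  have hq : ∀ (j : Fin M) (t : ℝ), HasDerivAt (q j) (β j + 2 * γ * t) t := by
    intro j t
    have : HasDerivAt (fun t : ℝ => α j + β j * t + γ * t ^ 2)
        (β j * 1 + γ * (↑2 * t ^ 1)) t :=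
      (((hasDerivAt_id t).const_mul (β j)).const_add (α j)).add ((hasDerivAt_pow 2 t).const_mul γ)
    convert this using 1
    push_cast; ring
  set S₁ : ℝ → ℝ := fun t => ∑ j, c j * ((β j + 2 * γ * t) * Real.exp (q j t)) with hS₁_def
  have hS : ∀ t, HasDerivAt S (S₁ t) t := by
    intro t
    refine HasDerivAt.fun_sum fun j _ => ?_
    have := ((hq j t).exp).const_mul (c j)
    refine this.congr_deriv ?_
    ring
  set S₂ : ℝ → ℝ := fun t => ∑ j, c j * (((β j + 2 * γ * t) ^ 2 + 2 * γ) * Real.exp (q j t))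
    with hS₂_def
  have hS₁ : ∀ t, HasDerivAt S₁ (S₂ t) t := by
    intro t
    refine HasDerivAt.fun_sum fun j _ => ?_
    have hlin : HasDerivAt (fun t : ℝ => β j + 2 * γ * t) (2 * γ) t := by
      simpa using ((hasDerivAt_id t).const_mul (2 * γ)).const_add (β j)
    have := (hlin.mul ((hq j t).exp)).const_mul (c j)
    refine this.congr_deriv ?_
    ring
  -- the line and chain rules
  set line : ℝ → EuclideanSpace ℝ (Fin n) := fun t => ψ + t • v with hline_def
  have hline : ∀ t, HasDerivAt line v t := by
    intro t
    have : HasDerivAt (fun t : ℝ => t • v) ((1:ℝ) • v) t := (hasDerivAt_id t).smul_const v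
    simpa [hline_def] using this
  have hline0 : line 0 = ψ := by simp [hline_def]
  have heq : (fun t => g (line t)) = fun t => Real.log (S t) := by
    funext t
    rw [hg_def, hline_def]
    simp only
    rw [hSJ t]
  have hh : ∀ t, HasDerivAt (fun t => Real.log (S t)) (S₁ t / S t) t :=
    fun t => (hS t).log (hSpos t).ne'
  have habs : ∀ t, HasDerivAt (fun t => g (line t)) (G (line t) v) t := by
    intro t
    exact ((hgd (line t)).hasFDerivAt).comp_hasDerivAt t (hline t)
  have hφ : ∀ t, G (line t) v = S₁ t / S t := by
    intro t
    have h1 := habs t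
    rw [heq] at h1
    exact h1.unique (hh t)
  -- second derivative at 0
  set D : ℝ := (S₂ 0 * S 0 - S₁ 0 * S₁ 0) / S 0 ^ 2 with hD_def
  have hh₁ : HasDerivAt (fun t => S₁ t / S t) D 0 := (hS₁ 0).div (hS 0) (hSpos 0).ne'
  have hA : HasDerivAt (fun t => G (line t) v) (fderiv ℝ (fun x => G x v) ψ v) 0 := by
    have hdiff : DifferentiableAt ℝ (fun x => G x v) ψ :=
      (hGd ψ).clm_apply (differentiableAt_const v)
    have h0 : HasFDerivAt (fun x => G x v) (fderiv ℝ (fun x => G x v) ψ) (line 0) := by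
      rw [hline0]; exact hdiff.hasFDerivAt
    exact h0.comp_hasDerivAt 0 (hline 0)
  have hA' : fderiv ℝ (fun x => G x v) ψ v = D := by
    have h1 : HasDerivAt (fun t => S₁ t / S t) (fderiv ℝ (fun x => G x v) ψ v) 0 := by
      have := hA
      have heq2 : (fun t => G (line t) v) = fun t => S₁ t / S t := funext hφ
      rwa [heq2] at this
    exact h1.unique hh₁
  have hiter : iteratedFDeriv ℝ 2 g ψ ![v, v] = D := by
    rw [iteratedFDeriv_two_apply]
    have h2 : fderiv ℝ (fun x => G x v) ψ =
        (G ψ).comp (fderiv ℝ (fun _ => v) ψ) + (fderiv ℝ G ψ).flip v :=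
      fderiv_clm_apply (hGd ψ) (differentiableAt_const v)
    have h3 : fderiv ℝ G ψ v v = D := by
      rw [← hA', h2]
      simp [fderiv_const]
    simpa using h3
  rw [hiter]
  -- now bound D
  set u : Fin M → ℝ := fun j => c j * Real.exp (α j) with hu_def
  have hu : ∀ j, 0 < u j := fun j => mul_pos (hc j) (Real.exp_pos _)
  set T : ℝ := ∑ j, u j with hT_def
  have hT : 0 < T :=
    Finset.sum_pos (fun j _ => hu j) (Finset.univ_nonempty_iff.mpr ⟨⟨0, hM⟩⟩)
  have hq0 : ∀ j, q j 0 = α j := by intro j; simp [hq_def]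
  have hS0 : S 0 = T := by
    rw [hS_def, hT_def]; exact Finset.sum_congr rfl fun j _ => by rw [hq0 j, hu_def]
  have hS₁0 : S₁ 0 = ∑ j, u j * β j := by
    rw [hS₁_def]
    refine Finset.sum_congr rfl fun j _ => ?_
    rw [hq0 j, hu_def]; ring
  have hS₂0 : S₂ 0 = (∑ j, u j * β j ^ 2) + 2 * γ * T := by
    rw [hS₂_def, hT_def, Finset.mul_sum, ← Finset.sum_add_distrib]
    refine Finset.sum_congr rfl fun j _ => ?_
    rw [hq0 j, hu_def]; ring
  -- variance bound
  set m : ℝ := a * inner ℝ ψ v with hm_def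
  set δ : Fin M → ℝ := fun j => -(a * inner ℝ (f j) v) with hδ_def
  have hβδ : ∀ j, β j = m + δ j := by
    intro j
    rw [hβ_def, hδ_def, hm_def, hw_def]
    simp only
    rw [inner_sub_left]
    ring
  have hδ2 : ∀ j, δ j ^ 2 ≤ a ^ 2 * L ^ 2 * ‖v‖ ^ 2 := by
    intro j
    have h1 : |(inner ℝ (f j) v : ℝ)| ≤ L * ‖v‖ :=
      le_trans (abs_real_inner_le_norm _ _)
        (mul_le_mul_of_nonneg_right (hL j) (norm_nonneg v))
    have h2 : δ j ^ 2 = a ^ 2 * (inner ℝ (f j) v : ℝ) ^ 2 := by rw [hδ_def]; ring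
    have h3 : (inner ℝ (f j) v : ℝ) ^ 2 ≤ (L * ‖v‖) ^ 2 := by
      rw [← sq_abs]
      exact pow_le_pow_left₀ (abs_nonneg _) h1 2
    calc δ j ^ 2 = a ^ 2 * (inner ℝ (f j) v : ℝ) ^ 2 := h2
      _ ≤ a ^ 2 * (L * ‖v‖) ^ 2 := mul_le_mul_of_nonneg_left h3 (sq_nonneg a)
      _ = a ^ 2 * L ^ 2 * ‖v‖ ^ 2 := by ring
  have e1 : ∑ j, u j * β j ^ 2 =
      m ^ 2 * T + 2 * m * (∑ j, u j * δ j) + ∑ j, u j * δ j ^ 2 := by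
    have : ∀ j ∈ Finset.univ, u j * β j ^ 2 =
        m ^ 2 * u j + 2 * m * (u j * δ j) + u j * δ j ^ 2 := by
      intro j _; rw [hβδ j]; ring
    rw [Finset.sum_congr rfl this, Finset.sum_add_distrib, Finset.sum_add_distrib,
      ← Finset.mul_sum, ← Finset.mul_sum, hT_def]
  have e2 : ∑ j, u j * β j = m * T + ∑ j, u j * δ j := by
    have : ∀ j ∈ Finset.univ, u j * β j = m * u j + u j * δ j := by
      intro j _; rw [hβδ j]; ring
    rw [Finset.sum_congr rfl this, Finset.sum_add_distrib, ← Finset.mul_sum, hT_def]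
  have hvar : T * (∑ j, u j * β j ^ 2) - (∑ j, u j * β j) ^ 2 ≤
      a ^ 2 * L ^ 2 * ‖v‖ ^ 2 * T ^ 2 := by
    have hsum2 : ∑ j, u j * δ j ^ 2 ≤ (a ^ 2 * L ^ 2 * ‖v‖ ^ 2) * T := by
      rw [hT_def, Finset.mul_sum]
      refine Finset.sum_le_sum fun j _ => ?_
      rw [mul_comm ((a ^ 2 * L ^ 2 * ‖v‖ ^ 2)) (u j)]
      exact mul_le_mul_of_nonneg_left (hδ2 j) (hu j).le
    have key2 : T * (∑ j, u j * β j ^ 2) - (∑ j, u j * β j) ^ 2 =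
        T * (∑ j, u j * δ j ^ 2) - (∑ j, u j * δ j) ^ 2 := by
      rw [e1, e2]; ring
    rw [key2]
    nlinarith [sq_nonneg (∑ j, u j * δ j), hT]
  have hnum : S₂ 0 * S 0 - S₁ 0 * S₁ 0 ≤ (a + a ^ 2 * L ^ 2) * ‖v‖ ^ 2 * S 0 ^ 2 := by
    rw [hS₂0, hS₁0, hS0]
    have h2γ : 2 * γ = a * ‖v‖ ^ 2 := by rw [hγ_def]; ring
    nlinarith [hvar, hT]
  have hD : D ≤ (a + a ^ 2 * L ^ 2) * ‖v‖ ^ 2 := by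
    rw [hD_def, div_le_iff₀ (pow_pos (hSpos 0) 2)]
    exact hnum
  calc D ≤ (a + a ^ 2 * L ^ 2) * ‖v‖ ^ 2 := hD
    _ = (a + a ^ 2 * L ^ 2) * ‖v‖ ^ 2 := rfl
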